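/- arXiv:2504.11859 — 8 statements merged into one kernel-verified Lean document; each statement's English description precedes it below -/
import Mathlib

section
/- Let S_P ⊆ (Fin m → Γ_P) and S_Q ⊆ (Fin n → Γ_Q) with a bijection R : S_Q ≃ S_P. Suppose g : Fin n → Option (Fin m), f : Fin n → Γ_P → Γ_Q with each f j injective, such that for all s ∈ S_Q: if g j = some i then s j = f j ((R s) i), and if g j = none then s j = v j for a fixed v : Fin n → Γ_Q. Assume additionally that g is 'surjective onto used indices': for every i : Fin m there exists j with g j = some i. If a clue c_P : Fin m → Option Γ_P uniquely determines an element of S_P (i.e., there is exactly one x_P ∈ S_P consistent with c_P), then the clue c_Q : Fin n → Option Γ_Q defined by c_Q j = Option.map (f j) (Option.bind (g j) c_P) if j is the minimal index with g j = some i, and none otherwise, uniquely determines an element of S_Q, and its size equals the size of c_P. -/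
open scoped Classical

def Satisfies {m : ℕ} {Γ : Type*} (c : Fin m → Option Γ) (s : Fin m → Γ) : Prop :=
  ∀ i a, c i = some a → s i = a

noncomputable def clueSize {m : ℕ} {Γ : Type*} (c : Fin m → Option Γ) : ℕ :=
  Set.ncard {i | c i ≠ none}

def UniqDetAt {m : ℕ} {Γ : Type*} (S : Set (Fin m → Γ)) (c : Fin m → Option Γ)
    (s : Fin m → Γ) : Prop :=
  s ∈ S ∧ Satisfies c s ∧ ∀ t ∈ S, Satisfies c t → t = s

def UniqDet {m : ℕ} {Γ : Type*} (S : Set (Fin m → Γ)) (c : Fin m → Option Γ) : Prop :=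
  ∃ s, UniqDetAt S c s

theorem stmt2 {m n : ℕ} {ΓP ΓQ : Type*}
    (SP : Set (Fin m → ΓP)) (SQ : Set (Fin n → ΓQ))
    (R : ↥SQ ≃ ↥SP)
    (g : Fin n → Option (Fin m)) (f : Fin n → ΓP → ΓQ) (v : Fin n → ΓQ)
    (hinj : ∀ j, Function.Injective (f j))
    (hdep : ∀ (s : ↥SQ) (j : Fin n) (i : Fin m),
      g j = some i → (s : Fin n → ΓQ) j = f j ((R s : Fin m → ΓP) i))
    (hconst : ∀ (s : ↥SQ) (j : Fin n), g j = none → (s : Fin n → ΓQ) j = v j)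
    (hsurj : ∀ i : Fin m, ∃ j : Fin n, g j = some i)
    (cP : Fin m → Option ΓP)
    (hcP : ∃! xP, xP ∈ SP ∧ Satisfies cP xP)
    (cQ : Fin n → Option ΓQ)
    (hcQ : ∀ j : Fin n,
      cQ j = if (∃ i : Fin m, g j = some i ∧ ∀ j' : Fin n, j' < j → g j' ≠ some i)
        then ((g j).bind cP).map (f j) else none) :
    (∃! xQ, xQ ∈ SQ ∧ Satisfies cQ xQ) ∧ clueSize cQ = clueSize cP := by
  classical
  obtain ⟨xP, ⟨hxPmem, hxPsat⟩, hxPuniq⟩ := hcP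
  have hne : ∀ i : Fin m, (Finset.univ.filter (fun j => g j = some i)).Nonempty := by
    intro i; obtain ⟨j, hj⟩ := hsurj i; exact ⟨j, by simp [hj]⟩
  set jmin : Fin m → Fin n := fun i => (Finset.univ.filter (fun j => g j = some i)).min' (hne i)
    with hjmin
  have hgj : ∀ i, g (jmin i) = some i := by
    intro i
    have := Finset.min'_mem _ (hne i)
    simpa [hjmin] using this
  have hmin : ∀ i (j' : Fin n), j' < jmin i → g j' ≠ some i := by
    intro i j' hlt hj'
    have : jmin i ≤ j' := Finset.min'_le _ _ (by simp [hj'])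
    exact absurd hlt (not_lt.mpr this)
  have hjmin_eq : ∀ (j : Fin n) (i : Fin m), g j = some i →
      (∀ j', j' < j → g j' ≠ some i) → j = jmin i := by
    intro j i hj hmin'
    have h1 : jmin i ≤ j := Finset.min'_le _ _ (by simp [hj])
    rcases lt_or_eq_of_le h1 with h | h
    · exact absurd (hgj i) (hmin' _ h)
    · exact h.symm
  have hjinj : Function.Injective jmin := by
    intro i i' h
    have := hgj i
    rw [h, hgj i'] at this
    exact (Option.some_injective _ this).symm
  have hcQ_eq : ∀ i, cQ (jmin i) = (cP i).map (f (jmin i)) := by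
    intro i
    rw [hcQ, if_pos ⟨i, hgj i, hmin i⟩, hgj i]
    rfl
  have hcQ_none : ∀ j, (¬ ∃ i, j = jmin i) → cQ j = none := by
    intro j hj
    rw [hcQ, if_neg]
    rintro ⟨i, hi, hm⟩
    exact hj ⟨i, hjmin_eq j i hi hm⟩
  set sQ : ↥SQ := R.symm ⟨xP, hxPmem⟩ with hsQ
  have hRsQ : (R sQ : Fin m → ΓP) = xP := by simp [hsQ]
  have hsat : Satisfies cQ (sQ : Fin n → ΓQ) := by
    intro j a h
    by_cases hj : ∃ i, j = jmin i
    · obtain ⟨i, rfl⟩ := hj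
      rw [hcQ_eq i] at h
      obtain ⟨b, hb, rfl⟩ := Option.map_eq_some_iff.mp h
      rw [hdep sQ (jmin i) i (hgj i), hRsQ, hxPsat i b hb]
    · rw [hcQ_none j hj] at h; exact absurd h (by simp)
  refine ⟨⟨sQ, ⟨sQ.2, hsat⟩, ?_⟩, ?_⟩
  · rintro t ⟨ht, htsat⟩
    have hRt : Satisfies cP ((R ⟨t, ht⟩ : Fin m → ΓP)) := by
      intro i a hi
      have h1 : cQ (jmin i) = some (f (jmin i) a) := by
        rw [hcQ_eq i, hi]; rfl
      have h2 := htsat (jmin i) _ h1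
      have h3 := hdep ⟨t, ht⟩ (jmin i) i (hgj i)
      exact hinj (jmin i) (h3.symm.trans h2)
    have h4 : (R ⟨t, ht⟩ : Fin m → ΓP) = xP := hxPuniq _ ⟨(R ⟨t, ht⟩).2, hRt⟩
    have h5 : R ⟨t, ht⟩ = ⟨xP, hxPmem⟩ := Subtype.ext h4
    have h6 : (⟨t, ht⟩ : ↥SQ) = sQ := by
      rw [hsQ, ← h5, Equiv.symm_apply_apply]
    exact congrArg Subtype.val h6
  · have hset : {j | cQ j ≠ none} = jmin '' {i | cP i ≠ none} := by
      ext j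
      simp only [Set.mem_setOf_eq, Set.mem_image]
      constructor
      · intro hj
        by_cases h : ∃ i, j = jmin i
        · obtain ⟨i, rfl⟩ := h
          refine ⟨i, ?_, rfl⟩
          rw [hcQ_eq i] at hj
          simpa using hj
        · exact absurd (hcQ_none j h) hj
      · rintro ⟨i, hi, rfl⟩
        rw [hcQ_eq i]
        simpa using hi
    unfold clueSize
    rw [hset, Set.ncard_image_of_injective _ hjinj]
end

section
/- Let S_P ⊆ (Fin m → Γ_P) and S_Q ⊆ (Fin n → Γ_Q) with a bijection R : S_Q ≃ S_P, and g : Fin n → Option (Fin m), f : Fin n → Γ_P → Γ_Q with each f j injective, such that for all s ∈ S_Q: if g j = some i then s j = f j ((R s) i), and if g j = none then s j = v j for fixed v. If there exists a clue c_Q of size at most k uniquely determining an element of S_Q, then there exists a clue c_P of size at most k uniquely determining an element of S_P. -/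
open scoped Classical

theorem stmt3 {m n : ℕ} {ΓP ΓQ : Type*}
    (SP : Set (Fin m → ΓP)) (SQ : Set (Fin n → ΓQ))
    (R : ↥SQ ≃ ↥SP)
    (g : Fin n → Option (Fin m)) (f : Fin n → ΓP → ΓQ) (v : Fin n → ΓQ)
    (hinj : ∀ j, Function.Injective (f j))
    (hdep : ∀ (s : ↥SQ) (j : Fin n) (i : Fin m),
      g j = some i → (s : Fin n → ΓQ) j = f j ((R s : Fin m → ΓP) i))
    (hconst : ∀ (s : ↥SQ) (j : Fin n), g j = none → (s : Fin n → ΓQ) j = v j)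
    (k : ℕ)
    (hQ : ∃ cQ : Fin n → Option ΓQ, clueSize cQ ≤ k ∧ UniqDet SQ cQ) :
    ∃ cP : Fin m → Option ΓP, clueSize cP ≤ k ∧ UniqDet SP cP := by
  obtain ⟨cQ, hsize, s₀, hs₀S, hs₀sat, hs₀uniq⟩ := hQ
  set s : ↥SQ := ⟨s₀, hs₀S⟩ with hs
  classical
  set cP : Fin m → Option ΓP := fun i =>
    if ∃ j, cQ j ≠ none ∧ g j = some i then some ((R s : Fin m → ΓP) i) else none
    with hcP
  refine ⟨cP, ?_, (R s : Fin m → ΓP), (R s).2, ?_, ?_⟩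
  · -- size bound
    have key : ∀ i ∈ {i | cP i ≠ none}, ∃ j, cQ j ≠ none ∧ g j = some i := by
      intro i hi
      by_contra h
      simp only [hcP, Set.mem_setOf_eq] at hi
      rw [if_neg h] at hi
      exact hi rfl
    rcases Set.eq_empty_or_nonempty {i | cP i ≠ none} with he | ⟨i0, hi0⟩
    · simp [clueSize, he]
    · obtain ⟨j0, _, _⟩ := key i0 hi0
      set φ : Fin m → Fin n := fun i =>
        if h : ∃ j, cQ j ≠ none ∧ g j = some i then Classical.choose h else j0 with hφ
      have hmem : ∀ i ∈ {i | cP i ≠ none}, cQ (φ i) ≠ none ∧ g (φ i) = some i := by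
        intro i hi
        have h := key i hi
        simp only [hφ, dif_pos h]
        exact Classical.choose_spec h
      calc clueSize cP ≤ Set.ncard {j | cQ j ≠ none} := by
            apply Set.ncard_le_ncard_of_injOn φ
            · intro i hi; exact (hmem i hi).1
            · intro i1 h1 i2 h2 he
              have e1 := (hmem i1 h1).2
              have e2 := (hmem i2 h2).2
              rw [he, e2] at e1
              exact (Option.some_injective _ e1).symm
        _ ≤ k := hsize
  · intro i a ha
    simp only [hcP] at ha
    split at ha
    · exact Option.some_injective _ ha
    · exact absurd ha (by simp)
  · intro t htS htsat
    set u : ↥SQ := R.symm ⟨t, htS⟩ with hu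
    have hRu : (R u : Fin m → ΓP) = t := by simp [hu]
    have husat : Satisfies cQ (u : Fin n → ΓQ) := by
      intro j b hb
      have hs₀j : s₀ j = b := hs₀sat j b hb
      cases hgj : g j with
      | none => rw [hconst u j hgj, ← hconst s j hgj]; exact hs₀j
      | some i =>
        have hi : cP i = some ((R s : Fin m → ΓP) i) := by
          simp only [hcP]
          rw [if_pos ⟨j, by simp [hb], hgj⟩]
        have hti : t i = (R s : Fin m → ΓP) i := htsat i _ hi
        rw [hdep u j i hgj, hRu, hti, ← hdep s j i hgj]
        exact hs₀j
    have : (u : Fin n → ΓQ) = s₀ := hs₀uniq _ u.2 husat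
    have huES : u = s := Subtype.ext this
    rw [← hRu, huES]
end

section
/- Let S_P ⊆ (Fin m → Γ_P) and S_Q ⊆ (Fin n → Γ_Q) with bijection R : S_Q ≃ S_P, and structure functions g, f, v as in the meta-theorem (each f j injective, s j = f j ((R s) i) when g j = some i, s j = v j when g j = none), and suppose every index i : Fin m is hit by g. Then for every k, there exists a clue of size ≤ k uniquely determining an element of S_P if and only if there exists a clue of size ≤ k uniquely determining an element of S_Q. -/
open scoped Classical

theorem stmt4 {m n : ℕ} {ΓP ΓQ : Type*}
    (SP : Set (Fin m → ΓP)) (SQ : Set (Fin n → ΓQ))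
    (R : ↥SQ ≃ ↥SP)
    (g : Fin n → Option (Fin m)) (f : Fin n → ΓP → ΓQ) (v : Fin n → ΓQ)
    (hinj : ∀ j, Function.Injective (f j))
    (hdep : ∀ (s : ↥SQ) (j : Fin n) (i : Fin m),
      g j = some i → (s : Fin n → ΓQ) j = f j ((R s : Fin m → ΓP) i))
    (hconst : ∀ (s : ↥SQ) (j : Fin n), g j = none → (s : Fin n → ΓQ) j = v j)
    (hsurj : ∀ i : Fin m, ∃ j : Fin n, g j = some i) :
    ∀ k : ℕ,
      (∃ cP : Fin m → Option ΓP, clueSize cP ≤ k ∧ UniqDet SP cP) ↔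
      (∃ cQ : Fin n → Option ΓQ, clueSize cQ ≤ k ∧ UniqDet SQ cQ) := by
  intro k
  choose h hh using hsurj
  constructor
  · rintro ⟨cP, hsize, sP, hsPmem, hsPsat, hsPuniq⟩
    set sub : ↥SP := ⟨sP, hsPmem⟩ with hsub
    set sQ : ↥SQ := R.symm sub with hsQ
    have hRsQ : R sQ = sub := R.apply_symm_apply sub
    refine ⟨fun j => if ∃ i, h i = j ∧ cP i ≠ none then some ((sQ : Fin n → ΓQ) j)
        else none, ?_, (sQ : Fin n → ΓQ), sQ.2, ?_, ?_⟩
    · calc Set.ncard {j | (if ∃ i, h i = j ∧ cP i ≠ none then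
            some ((sQ : Fin n → ΓQ) j) else none) ≠ none}
          ≤ Set.ncard (h '' {i | cP i ≠ none}) := by
            apply Set.ncard_le_ncard _ (Set.toFinite _)
            intro j hj
            simp only [Set.mem_setOf_eq] at hj
            by_cases hc : ∃ i, h i = j ∧ cP i ≠ none
            · obtain ⟨i, hij, hci⟩ := hc
              exact ⟨i, hci, hij⟩
            · simp [hc] at hj
        _ ≤ Set.ncard {i | cP i ≠ none} := Set.ncard_image_le (Set.toFinite _)
        _ ≤ k := hsize
    · intro j b hjb
      by_cases hc : ∃ i, h i = j ∧ cP i ≠ none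
      · simp only [if_pos hc] at hjb; exact Option.some_inj.mp hjb
      · simp only [if_neg hc] at hjb; exact absurd hjb (by simp)
    · intro t htmem htsat
      set tt : ↥SQ := ⟨t, htmem⟩ with htt
      have hRt : (R tt : Fin m → ΓP) = sP := by
        apply hsPuniq _ (R tt).2
        intro i a hia
        have hcond : ∃ i', h i' = h i ∧ cP i' ≠ none := ⟨i, rfl, by simp [hia]⟩
        have ht1 : t (h i) = (sQ : Fin n → ΓQ) (h i) :=
          htsat (h i) _ (by simp only [if_pos hcond])
        have ht2 : t (h i) = f (h i) ((R tt : Fin m → ΓP) i) := hdep tt (h i) i (hh i)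
        have ht3 : (sQ : Fin n → ΓQ) (h i) = f (h i) (sP i) := by
          have := hdep sQ (h i) i (hh i)
          rwa [hRsQ] at this
        have : f (h i) ((R tt : Fin m → ΓP) i) = f (h i) (sP i) := by
          rw [← ht2, ht1, ht3]
        have := hinj (h i) this
        rw [this, hsPsat i a hia]
      have : R tt = sub := Subtype.ext hRt
      have : tt = sQ := by rw [hsQ, ← this, R.symm_apply_apply]
      exact congrArg Subtype.val this
  · rintro ⟨cQ, hsize, sQ, hsQmem, hsQsat, hsQuniq⟩
    set subQ : ↥SQ := ⟨sQ, hsQmem⟩ with hsubQ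
    refine ⟨fun i => if ∃ j, g j = some i ∧ cQ j ≠ none then
        some ((R subQ : Fin m → ΓP) i) else none, ?_, (R subQ : Fin m → ΓP),
        (R subQ).2, ?_, ?_⟩
    · set jfn : Fin m → Fin n := fun i =>
        if hi : ∃ j, g j = some i ∧ cQ j ≠ none then hi.choose else h i with hjfn
      calc Set.ncard {i | (if ∃ j, g j = some i ∧ cQ j ≠ none then
            some ((R subQ : Fin m → ΓP) i) else none) ≠ none}
          ≤ Set.ncard {j | cQ j ≠ none} := by
            apply Set.ncard_le_ncard_of_injOn jfn _ _ (Set.toFinite _)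
            · intro i hi
              simp only [Set.mem_setOf_eq] at hi
              by_cases hc : ∃ j, g j = some i ∧ cQ j ≠ none
              · simp only [hjfn, dif_pos hc]
                exact hc.choose_spec.2
              · simp [hc] at hi
            · intro i1 h1 i2 h2 he
              simp only [Set.mem_setOf_eq] at h1 h2
              by_cases hc1 : ∃ j, g j = some i1 ∧ cQ j ≠ none
              · by_cases hc2 : ∃ j, g j = some i2 ∧ cQ j ≠ none
                · simp only [hjfn, dif_pos hc1, dif_pos hc2] at he
                  have e1 := hc1.choose_spec.1
                  have e2 := hc2.choose_spec.1
                  rw [he, e2] at e1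
                  exact (Option.some_inj.mp e1).symm
                · simp [hc2] at h2
              · simp [hc1] at h1
        _ ≤ k := hsize
    · intro i a hia
      by_cases hc : ∃ j, g j = some i ∧ cQ j ≠ none
      · simp only [if_pos hc] at hia; exact Option.some_inj.mp hia
      · simp only [if_neg hc] at hia; exact absurd hia (by simp)
    · intro t htmem htsat
      set tt : ↥SQ := R.symm ⟨t, htmem⟩ with htt
      have hRt : (R tt : Fin m → ΓP) = t := by
        rw [htt, R.apply_symm_apply]
      have : (tt : Fin n → ΓQ) = sQ := by
        apply hsQuniq _ tt.2
        intro j b hjb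
        have hb : sQ j = b := hsQsat j b hjb
        cases hgj : g j with
        | none =>
          rw [hconst tt j hgj, ← hconst subQ j hgj]
          exact hb
        | some i =>
          have hcond : ∃ j', g j' = some i ∧ cQ j' ≠ none := ⟨j, hgj, by simp [hjb]⟩
          have hti : t i = (R subQ : Fin m → ΓP) i :=
            htsat i _ (by simp only [if_pos hcond])
          have h1 : (tt : Fin n → ΓQ) j = f j (t i) := by
            rw [hdep tt j i hgj, hRt]
          have h2 : sQ j = f j ((R subQ : Fin m → ΓP) i) := hdep subQ j i hgj
          rw [h1, hti, ← h2, hb]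
      have : tt = subQ := Subtype.ext this
      rw [htt] at this
      have := congrArg R this
      rw [R.apply_symm_apply] at this
      exact congrArg Subtype.val this
end

section
/- Let S ⊆ (Fin m → Γ) and let σ : Fin n → Fin m be any function with S' = {s ∘ σ | s ∈ S} such that the map s ↦ s ∘ σ is injective on S. If σ is surjective, then for every k, S admits a uniquifying clue of size ≤ k if and only if S' does. -/
open scoped Classical

theorem stmt11 {m n : ℕ} {Γ : Type*} (S : Set (Fin m → Γ)) (σ : Fin n → Fin m)
    (hinjOn : Set.InjOn (fun s : Fin m → Γ => s ∘ σ) S)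
    (hσ : Function.Surjective σ) :
    ∀ k : ℕ,
      (∃ c : Fin m → Option Γ, clueSize c ≤ k ∧ UniqDet S c) ↔
      (∃ c : Fin n → Option Γ, clueSize c ≤ k ∧
        UniqDet ((fun s : Fin m → Γ => s ∘ σ) '' S) c) := by
  obtain ⟨τ, hτ⟩ := hσ.hasRightInverse
  intro k
  constructor
  · rintro ⟨c, hsize, s₀, hs₀S, hs₀c, huniq⟩
    set d : Fin n → Option Γ := fun j => if τ (σ j) = j then c (σ j) else none with hd
    have hsat : ∀ s : Fin m → Γ, Satisfies d (s ∘ σ) ↔ Satisfies c s := by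
      intro s
      constructor
      · intro h i a hia
        have : d (τ i) = some a := by
          simp [hd, hτ i, hia]
        have := h (τ i) a this
        simpa [hτ i] using this
      · intro h j a hja
        simp only [hd] at hja
        split_ifs at hja with hj
        exact h (σ j) a hja
    refine ⟨d, ?_, s₀ ∘ σ, ⟨s₀, hs₀S, rfl⟩, (hsat s₀).2 hs₀c, ?_⟩
    · have hsub : σ '' {j | d j ≠ none} ⊆ {i | c i ≠ none} := by
        rintro _ ⟨j, hj, rfl⟩
        simp only [hd, Set.mem_setOf_eq] at hj ⊢
        split_ifs at hj with h
        · exact hj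
        · simp at hj
      have hinj : Set.InjOn σ {j | d j ≠ none} := by
        intro j₁ h₁ j₂ h₂ he
        have e₁ : τ (σ j₁) = j₁ := by
          by_contra h; simp [hd, h] at h₁
        have e₂ : τ (σ j₂) = j₂ := by
          by_contra h; simp [hd, h] at h₂
        rw [← e₁, ← e₂, he]
      calc clueSize d = (σ '' {j | d j ≠ none}).ncard :=
            (Set.ncard_image_of_injOn hinj).symm
        _ ≤ {i | c i ≠ none}.ncard := Set.ncard_le_ncard hsub (Set.toFinite _)
        _ ≤ k := hsize
    · rintro _ ⟨t, htS, rfl⟩ ht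
      have := huniq t htS ((hsat t).1 ht)
      simp [this]
  · rintro ⟨c', hsize, s₀', ⟨s₀, hs₀S, rfl⟩, hs₀c, huniq⟩
    have key : ∀ j a, c' j = some a → s₀ (σ j) = a := fun j a h => hs₀c j a h
    set c : Fin m → Option Γ :=
      fun i => if ∃ j, σ j = i ∧ c' j ≠ none then some (s₀ i) else none with hc
    have hsat : ∀ t : Fin m → Γ, Satisfies c t ↔ Satisfies c' (t ∘ σ) := by
      intro t
      constructor
      · intro h j a hja
        have hP : ∃ j', σ j' = σ j ∧ c' j' ≠ none := ⟨j, rfl, by simp [hja]⟩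
        have : c (σ j) = some (s₀ (σ j)) := by simp [hc, hP]
        have := h (σ j) _ this
        simp only [Function.comp_apply]
        rw [this, key j a hja]
      · intro h i a hia
        simp only [hc] at hia
        split_ifs at hia with hP
        · obtain ⟨j, hj, hjne⟩ := hP
          obtain ⟨b, hb⟩ := Option.ne_none_iff_exists'.1 hjne
          have h1 := h j b hb
          have h2 := key j b hb
          simp only [Function.comp_apply] at h1
          rw [hj] at h1 h2
          rw [h1, ← h2]
          exact Option.some_inj.1 hia
    refine ⟨c, ?_, s₀, hs₀S, ?_, ?_⟩
    · have hsub : {i | c i ≠ none} ⊆ σ '' {j | c' j ≠ none} := by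
        intro i hi
        simp only [hc, Set.mem_setOf_eq] at hi
        split_ifs at hi with hP
        · obtain ⟨j, hj, hjne⟩ := hP
          exact ⟨j, hjne, hj⟩
        · simp at hi
      calc clueSize c ≤ (σ '' {j | c' j ≠ none}).ncard :=
            Set.ncard_le_ncard hsub (Set.toFinite _)
        _ ≤ {j | c' j ≠ none}.ncard := Set.ncard_image_le (Set.toFinite _)
        _ ≤ k := hsize
    · intro i a hia
      simp only [hc] at hia
      split_ifs at hia with hP
      · exact Option.some_inj.1 hia
    · intro t htS ht
      have h1 : (fun s : Fin m → Γ => s ∘ σ) t = (fun s => s ∘ σ) s₀ :=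
        huniq (t ∘ σ) ⟨t, htS, rfl⟩ ((hsat t).1 ht)
      exact hinjOn htS hs₀S h1
end

section
/- Let S ⊆ (Fin m → Γ) be finite and nonempty, and fix s ∈ S. Define D(s,t) = {i | s i ≠ t i} for t ∈ S, t ≠ s. Then a clue c consistent with s uniquely determines s if and only if for every t ∈ S with t ≠ s, there exists i ∈ D(s,t) with c i ≠ none. In particular, the minimum size of a clue uniquifying s equals the minimum size of a hitting set for the family {D(s,t) : t ∈ S, t ≠ s}. -/
open scoped Classical

theorem stmt14 {m : ℕ} {Γ : Type*} (S : Set (Fin m → Γ))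
    (hfin : S.Finite) (hne : S.Nonempty) (s : Fin m → Γ) (hs : s ∈ S) :
    (∀ c : Fin m → Option Γ, Satisfies c s →
      (UniqDetAt S c s ↔
        ∀ t ∈ S, t ≠ s → ∃ i : Fin m, s i ≠ t i ∧ c i ≠ none)) ∧
    sInf {k : ℕ | ∃ c : Fin m → Option Γ,
        Satisfies c s ∧ UniqDetAt S c s ∧ clueSize c = k} =
      sInf {k : ℕ | ∃ H : Finset (Fin m),
        (∀ t ∈ S, t ≠ s → ∃ i ∈ H, s i ≠ t i) ∧ H.card = k} := by
  have key : ∀ c : Fin m → Option Γ, Satisfies c s →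
      (UniqDetAt S c s ↔ ∀ t ∈ S, t ≠ s → ∃ i : Fin m, s i ≠ t i ∧ c i ≠ none) := by
    intro c hc
    constructor
    · rintro ⟨-, -, huniq⟩ t ht hts
      by_contra h
      push_neg at h
      apply hts
      apply huniq t ht
      intro i a hia
      by_cases hst : s i = t i
      · rw [← hst]; exact hc i a hia
      · exact absurd hia (by simp [h i hst])
    · intro h
      refine ⟨hs, hc, fun t ht hct => ?_⟩
      by_contra hts
      obtain ⟨i, hi1, hi2⟩ := h t ht hts
      obtain ⟨a, ha⟩ := Option.ne_none_iff_exists'.mp hi2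
      exact hi1 ((hc i a ha).trans (hct i a ha).symm)
  refine ⟨key, ?_⟩
  congr 1
  ext k
  simp only [Set.mem_setOf_eq]
  constructor
  · rintro ⟨c, hc, hu, rfl⟩
    refine ⟨Finset.univ.filter (fun i => c i ≠ none), ?_, ?_⟩
    · intro t ht hts
      obtain ⟨i, hi1, hi2⟩ := (key c hc).mp hu t ht hts
      exact ⟨i, by simp [hi2], hi1⟩
    · unfold clueSize
      rw [Set.ncard_eq_toFinset_card']
      congr 1
      ext i; simp
  · rintro ⟨H, hH, rfl⟩
    have hsat : Satisfies (fun i => if i ∈ H then some (s i) else none) s := by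
      intro i a hia
      by_cases h : i ∈ H <;> simp [h] at hia
      exact hia
    refine ⟨fun i => if i ∈ H then some (s i) else none, hsat, ?_, ?_⟩
    · rw [key _ hsat]
      intro t ht hts
      obtain ⟨i, hiH, hi⟩ := hH t ht hts
      exact ⟨i, hi, by simp [hiH]⟩
    · unfold clueSize
      have : {i | (if i ∈ H then some (s i) else none : Option Γ) ≠ none} = ↑H := by
        ext i; by_cases h : i ∈ H <;> simp [h]
      rw [this, Set.ncard_coe_finset]
end

section
/- Let S_P ⊆ (Fin m → Γ_P), S_Q ⊆ (Fin n → Γ_Q), with bijection R : S_Q ≃ S_P and structure g, f (injective per index), v as in the meta-theorem, and assume every i : Fin m is in the range of g. Then the minimum clue size needed to uniquify some element of S_P equals the minimum clue size needed to uniquify some element of S_Q. -/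
open scoped Classical

theorem stmt15 {m n : ℕ} {ΓP ΓQ : Type*}
    (SP : Set (Fin m → ΓP)) (SQ : Set (Fin n → ΓQ))
    (hfinP : SP.Finite) (hneP : SP.Nonempty)
    (hfinQ : SQ.Finite) (hneQ : SQ.Nonempty)
    (R : ↥SQ ≃ ↥SP)
    (g : Fin n → Option (Fin m)) (f : Fin n → ΓP → ΓQ) (v : Fin n → ΓQ)
    (hinj : ∀ j, Function.Injective (f j))
    (hdep : ∀ (s : ↥SQ) (j : Fin n) (i : Fin m),
      g j = some i → (s : Fin n → ΓQ) j = f j ((R s : Fin m → ΓP) i))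
    (hconst : ∀ (s : ↥SQ) (j : Fin n), g j = none → (s : Fin n → ΓQ) j = v j)
    (hsurj : ∀ i : Fin m, ∃ j : Fin n, g j = some i) :
    sInf {k : ℕ | ∃ c : Fin m → Option ΓP, UniqDet SP c ∧ clueSize c = k} =
    sInf {k : ℕ | ∃ c : Fin n → Option ΓQ, UniqDet SQ c ∧ clueSize c = k} := by
  classical
  set KP := {k : ℕ | ∃ c : Fin m → Option ΓP, UniqDet SP c ∧ clueSize c = k} with hKP
  set KQ := {k : ℕ | ∃ c : Fin n → Option ΓQ, UniqDet SQ c ∧ clueSize c = k} with hKQ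
  -- full clues give nonemptiness
  have hKPne : KP.Nonempty := by
    obtain ⟨s0, hs0⟩ := hneP
    refine ⟨_, fun i => some (s0 i), ⟨s0, hs0, ?_, ?_⟩, rfl⟩
    · intro i a h; exact Option.some_injective _ h
    · intro t _ ht; funext i; exact ht i (s0 i) rfl
  have hKQne : KQ.Nonempty := by
    obtain ⟨s0, hs0⟩ := hneQ
    refine ⟨_, fun j => some (s0 j), ⟨s0, hs0, ?_, ?_⟩, rfl⟩
    · intro j a h; exact Option.some_injective _ h
    · intro t _ ht; funext j; exact ht j (s0 j) rfl
  -- choice function for hsurj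
  let jc : Fin m → Fin n := fun i => Classical.choose (hsurj i)
  have hjc : ∀ i, g (jc i) = some i := fun i => Classical.choose_spec (hsurj i)
  have hjcinj : Function.Injective jc := by
    intro i i' h
    have := hjc i
    rw [h, hjc i'] at this
    exact (Option.some_injective _ this).symm
  -- Direction 1: from a P-clue build a Q-clue of the same size
  have dir1 : ∀ c : Fin m → Option ΓP, UniqDet SP c →
      ∃ c' : Fin n → Option ΓQ, UniqDet SQ c' ∧ clueSize c' ≤ clueSize c := by
    intro c ⟨s0, hs0mem, hs0sat, hs0uniq⟩
    set c' : Fin n → Option ΓQ :=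
      fun j => (g j).bind (fun i => if jc i = j then (c i).map (f j) else none) with hc'
    -- the witness on the Q side
    set t0 : ↥SQ := R.symm ⟨s0, hs0mem⟩ with ht0
    have hRt0 : (R t0 : Fin m → ΓP) = s0 := by simp [ht0]
    refine ⟨c', ⟨t0, t0.2, ?_, ?_⟩, ?_⟩
    · -- t0 satisfies c'
      intro j b hb
      simp only [hc', Option.bind_eq_some_iff] at hb
      obtain ⟨i, hgj, hif⟩ := hb
      by_cases hji : jc i = j
      · simp only [hji, if_true, Option.map_eq_some_iff] at hif
        obtain ⟨a, hca, hfa⟩ := hif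
        rw [hdep t0 j i hgj, hRt0, hs0sat i a hca, hfa]
      · simp [hji] at hif
    · -- uniqueness on Q side
      intro t htmem hts
      have hsat : Satisfies c (R ⟨t, htmem⟩ : Fin m → ΓP) := by
        intro i a hca
        have hcj : c' (jc i) = some (f (jc i) a) := by
          simp [hc', hjc i, hca]
        have := hts (jc i) _ hcj
        have hd := hdep ⟨t, htmem⟩ (jc i) i (hjc i)
        exact hinj (jc i) (by rw [← hd]; exact this)
      have hR : (R ⟨t, htmem⟩ : Fin m → ΓP) = s0 :=
        hs0uniq _ (R ⟨t, htmem⟩).2 hsat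
      have : R ⟨t, htmem⟩ = R t0 := by
        apply Subtype.ext; rw [hR, hRt0]
      have := R.injective this
      exact congrArg Subtype.val this
    · -- size bound
      have hset : {j | c' j ≠ none} = jc '' {i | c i ≠ none} := by
        ext j
        simp only [Set.mem_setOf_eq, Set.mem_image]
        constructor
        · intro h
          rcases hgj : g j with _ | i
          · exact absurd (by simp [hc', hgj]) h
          · by_cases hji : jc i = j
            · refine ⟨i, ?_, hji⟩
              intro hci
              exact h (by simp [hc', hgj, hci])
            · exact absurd (by simp [hc', hgj, hji]) h
        · rintro ⟨i, hci, rfl⟩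
          rcases hc : c i with _ | a
          · exact absurd hc hci
          · simp [hc', hjc i, hc]
      rw [clueSize, clueSize, hset,
        Set.ncard_image_of_injective _ hjcinj]
  -- Direction 2: from a Q-clue build a P-clue of size ≤
  have dir2 : ∀ c' : Fin n → Option ΓQ, UniqDet SQ c' →
      ∃ c : Fin m → Option ΓP, UniqDet SP c ∧ clueSize c ≤ clueSize c' := by
    intro c' ⟨t0, ht0mem, ht0sat, ht0uniq⟩
    set p : Fin m → ΓP := (R ⟨t0, ht0mem⟩ : Fin m → ΓP) with hp
    set I : Set (Fin m) := {i | ∃ j, g j = some i ∧ c' j ≠ none} with hI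
    set c : Fin m → Option ΓP := fun i => if i ∈ I then some (p i) else none with hc
    refine ⟨c, ⟨p, (R ⟨t0, ht0mem⟩).2, ?_, ?_⟩, ?_⟩
    · intro i a ha
      simp only [hc] at ha
      split_ifs at ha
      exact Option.some_injective _ ha
    · -- uniqueness on P side
      intro t htmem hts
      set u : ↥SQ := R.symm ⟨t, htmem⟩ with hu
      have hRu : (R u : Fin m → ΓP) = t := by simp [hu]
      have husat : Satisfies c' (u : Fin n → ΓQ) := by
        intro j b hb
        rcases hgj : g j with _ | i
        · rw [hconst u j hgj, ← hconst ⟨t0, ht0mem⟩ j hgj]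
          exact ht0sat j b hb
        · have hiI : i ∈ I := ⟨j, hgj, by simp [hb]⟩
          have hci : c i = some (p i) := by simp [hc, hiI]
          have hti : t i = p i := hts i (p i) hci
          have := hdep u j i hgj
          rw [hRu, hti] at this
          rw [this, ← hdep ⟨t0, ht0mem⟩ j i hgj]
          exact ht0sat j b hb
      have : (u : Fin n → ΓQ) = t0 := ht0uniq _ u.2 husat
      have hu0 : u = ⟨t0, ht0mem⟩ := Subtype.ext this
      rw [← hRu, hu0]
    · -- size bound
      have hsub : {i | c i ≠ none} ⊆ I := by
        intro i hi
        by_contra h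
        exact hi (by simp [hc, h])
      have hφ : ∀ i ∈ I, ∃ j, g j = some i ∧ c' j ≠ none := fun i hi => hi
      let φ : Fin m → Fin n := fun i =>
        if h : i ∈ I then Classical.choose (hφ i h) else jc i
      have hφmem : ∀ i ∈ I, φ i ∈ {j | c' j ≠ none} := by
        intro i hi
        simp only [φ, dif_pos hi]
        exact (Classical.choose_spec (hφ i hi)).2
      have hφinj : Set.InjOn φ I := by
        intro i hi i' hi' h
        simp only [φ, dif_pos hi, dif_pos hi'] at h
        have h1 := (Classical.choose_spec (hφ i hi)).1
        have h2 := (Classical.choose_spec (hφ i' hi')).1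
        rw [h] at h1
        rw [h2] at h1
        exact (Option.some_injective _ h1).symm
      calc clueSize c ≤ I.ncard := Set.ncard_le_ncard hsub (Set.toFinite _)
        _ ≤ {j | c' j ≠ none}.ncard :=
            Set.ncard_le_ncard_of_injOn φ hφmem hφinj (Set.toFinite _)
        _ = clueSize c' := rfl
  -- conclude
  apply le_antisymm
  · obtain ⟨c', hc', hsz⟩ := Nat.sInf_mem hKQne
    obtain ⟨c, hc, hle⟩ := dir2 c' hc'
    calc sInf KP ≤ clueSize c := Nat.sInf_le ⟨c, hc, rfl⟩
      _ ≤ clueSize c' := hle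
      _ = sInf KQ := hsz
  · obtain ⟨c, hc, hsz⟩ := Nat.sInf_mem hKPne
    obtain ⟨c', hc', hle⟩ := dir1 c hc
    calc sInf KQ ≤ clueSize c' := Nat.sInf_le ⟨c', hc', rfl⟩
      _ ≤ clueSize c := hle
      _ = sInf KP := hsz
end

section
/- Let S_P, S_Q and R : S_Q ≃ S_P be as in the meta-theorem with structure maps g, f, v, where each f j is injective, and assume every i : Fin m is in the range of g. If x_Q, x_Q' ∈ S_Q both satisfy the transferred clue c_Q (constructed from a clue c_P by setting c_Q j = some (f j a) at the minimal j with g j = some i whenever c_P i = some a), then R x_Q and R x_Q' both satisfy c_P. -/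
open scoped Classical

theorem stmt18 {m n : ℕ} {ΓP ΓQ : Type*}
    (SP : Set (Fin m → ΓP)) (SQ : Set (Fin n → ΓQ))
    (R : ↥SQ ≃ ↥SP)
    (g : Fin n → Option (Fin m)) (f : Fin n → ΓP → ΓQ) (v : Fin n → ΓQ)
    (hinj : ∀ j, Function.Injective (f j))
    (hdep : ∀ (s : ↥SQ) (j : Fin n) (i : Fin m),
      g j = some i → (s : Fin n → ΓQ) j = f j ((R s : Fin m → ΓP) i))
    (hconst : ∀ (s : ↥SQ) (j : Fin n), g j = none → (s : Fin n → ΓQ) j = v j)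
    (hsurj : ∀ i : Fin m, ∃ j : Fin n, g j = some i)
    (cP : Fin m → Option ΓP) (cQ : Fin n → Option ΓQ)
    (hcQ : ∀ j : Fin n,
      cQ j = if (∃ i : Fin m, g j = some i ∧ ∀ j' : Fin n, j' < j → g j' ≠ some i)
        then ((g j).bind cP).map (f j) else none)
    (xQ xQ' : ↥SQ)
    (hxQ : Satisfies cQ (xQ : Fin n → ΓQ))
    (hxQ' : Satisfies cQ (xQ' : Fin n → ΓQ)) :
    Satisfies cP (R xQ : Fin m → ΓP) ∧ Satisfies cP (R xQ' : Fin m → ΓP) := by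
  have key : ∀ s : ↥SQ, Satisfies cQ (s : Fin n → ΓQ) → Satisfies cP (R s : Fin m → ΓP) := by
    intro s hs i a hia
    obtain ⟨j0, hj0⟩ := hsurj i
    have hex : ∃ j : Fin n, g j = some i := ⟨j0, hj0⟩
    classical
    obtain ⟨j, hj, hmin⟩ := Finset.exists_min_image (Finset.univ.filter fun j => g j = some i)
      id ⟨j0, by simp [hj0]⟩
    simp only [Finset.mem_filter] at hj
    have hcond : ∃ i' : Fin m, g j = some i' ∧ ∀ j' : Fin n, j' < j → g j' ≠ some i' := by
      refine ⟨i, hj.2, fun j' hlt hj' => ?_⟩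
      have := hmin j' (by simp [hj'])
      exact absurd hlt (not_lt.mpr this)
    have hcj : cQ j = some (f j a) := by
      rw [hcQ j, if_pos hcond, hj.2]
      simp [hia]
    have h1 : (s : Fin n → ΓQ) j = f j a := hs j _ hcj
    have h2 : (s : Fin n → ΓQ) j = f j ((R s : Fin m → ΓP) i) := hdep s j i hj.2
    exact hinj j (h2.symm.trans h1)
  exact ⟨key xQ hxQ, key xQ' hxQ'⟩
end

section
/- Let S_P, S_Q, R, g, f as in the meta-theorem (each f j injective, s j = f j ((R s) i) when g j = some i). Given a clue c_Q for S_Q, define c_P : Fin m → Option Γ_P by: c_P i = some ((f j).invFun b) if there exists j with g j = some i and c_Q j = some b (choosing one such j), and none otherwise. Then every s ∈ S_Q satisfying c_Q has R s satisfying c_P, and size c_P ≤ size c_Q. -/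
open scoped Classical

theorem stmt19 {m n : ℕ} {ΓP ΓQ : Type*} [Nonempty ΓP]
    (SP : Set (Fin m → ΓP)) (SQ : Set (Fin n → ΓQ))
    (R : ↥SQ ≃ ↥SP)
    (g : Fin n → Option (Fin m)) (f : Fin n → ΓP → ΓQ)
    (hinj : ∀ j, Function.Injective (f j))
    (hdep : ∀ (s : ↥SQ) (j : Fin n) (i : Fin m),
      g j = some i → (s : Fin n → ΓQ) j = f j ((R s : Fin m → ΓP) i))
    (cQ : Fin n → Option ΓQ) (cP : Fin m → Option ΓP)
    (hcP : ∀ i : Fin m,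
      (∃ j : Fin n, ∃ b : ΓQ, g j = some i ∧ cQ j = some b ∧
        cP i = some (Function.invFun (f j) b)) ∨
      (cP i = none ∧ ∀ j : Fin n, g j = some i → cQ j = none)) :
    (∀ s : ↥SQ, Satisfies cQ (s : Fin n → ΓQ) →
      Satisfies cP (R s : Fin m → ΓP)) ∧
    clueSize cP ≤ clueSize cQ := by
  constructor
  · intro s hs i a hia
    rcases hcP i with ⟨j, b, hg, hcQ, hcPi⟩ | ⟨hnone, _⟩
    · rw [hia] at hcPi
      have hsj : (s : Fin n → ΓQ) j = b := hs j b hcQ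
      have := hdep s j i hg
      have hb : f j ((R s : Fin m → ΓP) i) = b := by rw [← this, hsj]
      have : Function.invFun (f j) b = (R s : Fin m → ΓP) i := by
        rw [← hb, Function.leftInverse_invFun (hinj j)]
      rw [Option.some_inj] at hcPi
      rw [hcPi, ← this]
    · rw [hnone] at hia; exact absurd hia (Option.some_ne_none a).symm
  · rcases isEmpty_or_nonempty (Fin n) with hn | hn
    · have : {i | cP i ≠ none} = ∅ := by
        ext i
        simp only [Set.mem_setOf_eq, Set.mem_empty_iff_false, iff_false, not_not]
        rcases hcP i with ⟨j, _, _, _, _⟩ | ⟨hnone, _⟩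
        · exact (hn.false j).elim
        · exact hnone
      simp [clueSize, this]
    · have hchoice : ∀ i, ∃ j, cP i ≠ none → g j = some i ∧ cQ j ≠ none := by
        intro i
        rcases hcP i with ⟨j, b, hg, hcQ, _⟩ | ⟨hnone, _⟩
        · exact ⟨j, fun _ => ⟨hg, by simp [hcQ]⟩⟩
        · exact ⟨Classical.arbitrary _, fun h => absurd hnone h⟩
      choose F hF using hchoice
      apply Set.ncard_le_ncard_of_injOn F
      · intro i hi; exact (hF i hi).2
      · intro i hi i' hi' hFe
        have h1 := (hF i hi).1
        have h2 := (hF i' hi').1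
        rw [hFe, h2] at h1
        exact (Option.some_inj.mp h1).symm
end
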